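/- For a positive differentiable function α : [0,T] → (0,∞) with |dα/dt| ≤ C α (1 + |log α|), the function β(t) = log(1 + |log α(t)|) satisfies |β(t) - β(s)| ≤ C'|t - s| for a constant C' depending only on C, and hence 1 + |log α(t)| ≤ e^{C'T}(1 + |log α(s)|) for all s,t ∈ [0,T]. -/

import Mathlib

private lemma aux_approx' (ε u : ℝ) (hε : 0 < ε) :
    |Real.log (1 + Real.sqrt (ε^2 + u^2)) - Real.log (1 + |u|)| ≤ ε := by
  have hu : (0:ℝ) ≤ |u| := abs_nonneg u
  have h1 : (0:ℝ) < 1 + |u| := by linarith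
  have hle : |u| ≤ Real.sqrt (ε^2 + u^2) := by
    rw [← Real.sqrt_sq_eq_abs]
    exact Real.sqrt_le_sqrt (by nlinarith)
  have hle2 : Real.sqrt (ε^2 + u^2) ≤ |u| + ε := by
    have h : Real.sqrt ((|u| + ε)^2) = |u| + ε := Real.sqrt_sq (by linarith)
    rw [← h]
    exact Real.sqrt_le_sqrt (by nlinarith [sq_abs u])
  have hmono : Real.log (1 + |u|) ≤ Real.log (1 + Real.sqrt (ε^2 + u^2)) :=
    Real.log_le_log h1 (by linarith)
  have hub : Real.log (1 + Real.sqrt (ε^2 + u^2)) - Real.log (1 + |u|) ≤ ε := by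
    rw [← Real.log_div (by positivity) (ne_of_gt h1)]
    have h2 : (1 + Real.sqrt (ε^2 + u^2)) / (1 + |u|) ≤ 1 + ε := by
      rw [div_le_iff₀ h1]; nlinarith
    calc Real.log ((1 + Real.sqrt (ε^2 + u^2)) / (1 + |u|)) ≤ Real.log (1 + ε) :=
          Real.log_le_log (by positivity) h2
      _ ≤ (1 + ε) - 1 := Real.log_le_sub_one_of_pos (by linarith)
      _ = ε := by ring
  rw [abs_sub_le_iff]
  constructor <;> linarith

private lemma aux_deriv' (ε : ℝ) (hε : 0 < ε) (α : ℝ → ℝ) (x : ℝ)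
    (hd : DifferentiableAt ℝ α x) (hp : 0 < α x) :
    HasDerivAt (fun t => Real.log (1 + Real.sqrt (ε^2 + (Real.log (α t))^2)))
      ((Real.log (α x) * (deriv α x / α x) / Real.sqrt (ε^2 + (Real.log (α x))^2))
        / (1 + Real.sqrt (ε^2 + (Real.log (α x))^2))) x := by
  have hr : 0 < Real.sqrt (ε^2 + (Real.log (α x))^2) := Real.sqrt_pos.2 (by positivity)
  have hL : HasDerivAt (fun t => Real.log (α t)) (deriv α x / α x) x := by
    have := (Real.hasDerivAt_log hp.ne').comp x hd.hasDerivAt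
    simpa [div_eq_inv_mul, Function.comp_def] using this
  have hg : HasDerivAt (fun t => ε^2 + (Real.log (α t))^2)
      (2 * Real.log (α x) ^ 1 * (deriv α x / α x)) x :=
    (hL.pow 2).const_add (ε^2)
  have hs : HasDerivAt (fun t => Real.sqrt (ε^2 + (Real.log (α t))^2))
      ((2 * Real.log (α x) ^ 1 * (deriv α x / α x)) / (2 * Real.sqrt (ε^2 + (Real.log (α x))^2))) x :=
    hg.sqrt (by positivity)
  have h1 : HasDerivAt (fun t => 1 + Real.sqrt (ε^2 + (Real.log (α t))^2))
      ((2 * Real.log (α x) ^ 1 * (deriv α x / α x)) / (2 * Real.sqrt (ε^2 + (Real.log (α x))^2))) x :=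
    hs.const_add 1
  have hlog := h1.log (by positivity)
  convert hlog using 1
  field_simp

/-- If `|α'| ≤ C α (1 + |log α|)`, then `β(t) = log(1 + |log α(t)|)` is Lipschitz
with a constant depending only on `C`, hence
`1 + |log α(t)| ≤ e^{C'T}(1 + |log α(s)|)` for all `s,t ∈ [0,T]`. -/
theorem log_log_lipschitz_of_log_gronwall
    (T C : ℝ) (hT : 0 < T) (hC : 0 < C)
    (α : ℝ → ℝ)
    (hdiff : ∀ t ∈ Set.Icc (0:ℝ) T, DifferentiableAt ℝ α t)
    (hpos : ∀ t ∈ Set.Icc (0:ℝ) T, 0 < α t)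
    (hineq : ∀ t ∈ Set.Icc (0:ℝ) T,
      |deriv α t| ≤ C * α t * (1 + |Real.log (α t)|)) :
    ∃ C' : ℝ, 0 < C' ∧
      (∀ s ∈ Set.Icc (0:ℝ) T, ∀ t ∈ Set.Icc (0:ℝ) T,
        |Real.log (1 + |Real.log (α t)|) - Real.log (1 + |Real.log (α s)|)|
          ≤ C' * |t - s|) ∧
      (∀ s ∈ Set.Icc (0:ℝ) T, ∀ t ∈ Set.Icc (0:ℝ) T,
        1 + |Real.log (α t)| ≤ Real.exp (C' * T) * (1 + |Real.log (α s)|)) := by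
  -- Lipschitz bound for the smoothed function, for every ε > 0
  have key : ∀ ε > (0:ℝ), ∀ s ∈ Set.Icc (0:ℝ) T, ∀ t ∈ Set.Icc (0:ℝ) T,
      |Real.log (1 + Real.sqrt (ε^2 + (Real.log (α t))^2)) -
        Real.log (1 + Real.sqrt (ε^2 + (Real.log (α s))^2))| ≤ C * |t - s| := by
    intro ε hε s hs t ht
    set F' : ℝ → ℝ := fun x =>
      (Real.log (α x) * (deriv α x / α x) / Real.sqrt (ε^2 + (Real.log (α x))^2))
        / (1 + Real.sqrt (ε^2 + (Real.log (α x))^2)) with hF'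
    have hder : ∀ x ∈ Set.Icc (0:ℝ) T,
        HasDerivWithinAt (fun t => Real.log (1 + Real.sqrt (ε^2 + (Real.log (α t))^2)))
          (F' x) (Set.Icc 0 T) x := fun x hx =>
      (aux_deriv' ε hε α x (hdiff x hx) (hpos x hx)).hasDerivWithinAt
    have hbound : ∀ x ∈ Set.Icc (0:ℝ) T, ‖F' x‖ ≤ C := by
      intro x hx
      have hp := hpos x hx
      have hr : 0 < Real.sqrt (ε^2 + (Real.log (α x))^2) := Real.sqrt_pos.2 (by positivity)
      have habs : |Real.log (α x)| ≤ Real.sqrt (ε^2 + (Real.log (α x))^2) := by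
        rw [← Real.sqrt_sq_eq_abs]
        exact Real.sqrt_le_sqrt (by nlinarith)
      have hu' : |deriv α x / α x| ≤ C * (1 + |Real.log (α x)|) := by
        rw [abs_div, abs_of_pos hp, div_le_iff₀ hp]
        calc |deriv α x| ≤ C * α x * (1 + |Real.log (α x)|) := hineq x hx
          _ = C * (1 + |Real.log (α x)|) * α x := by ring
      rw [Real.norm_eq_abs, hF']
      have h1 : 0 < 1 + Real.sqrt (ε^2 + (Real.log (α x))^2) := by linarith
      rw [abs_div, abs_div, abs_of_pos h1, abs_of_pos hr, abs_mul]
      rw [div_div, div_le_iff₀ (by positivity)]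
      have hnn : (0:ℝ) ≤ |Real.log (α x)| := abs_nonneg _
      have hC1 : 1 + |Real.log (α x)| ≤ 1 + Real.sqrt (ε^2 + (Real.log (α x))^2) := by linarith
      calc |Real.log (α x)| * |deriv α x / α x|
          ≤ Real.sqrt (ε^2 + (Real.log (α x))^2) * (C * (1 + |Real.log (α x)|)) :=
            mul_le_mul habs hu' (abs_nonneg _) (le_of_lt hr)
        _ ≤ Real.sqrt (ε^2 + (Real.log (α x))^2) *
              (C * (1 + Real.sqrt (ε^2 + (Real.log (α x))^2))) := by
            gcongr
        _ = C * (Real.sqrt (ε^2 + (Real.log (α x))^2) *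
              (1 + Real.sqrt (ε^2 + (Real.log (α x))^2))) := by ring
    have := (convex_Icc (0:ℝ) T).norm_image_sub_le_of_norm_hasDerivWithin_le
      hder hbound hs ht
    simpa [Real.norm_eq_abs] using this
  have lip : ∀ s ∈ Set.Icc (0:ℝ) T, ∀ t ∈ Set.Icc (0:ℝ) T,
      |Real.log (1 + |Real.log (α t)|) - Real.log (1 + |Real.log (α s)|)| ≤ C * |t - s| := by
    intro s hs t ht
    refine le_of_forall_pos_le_add ?_
    intro ε hε
    have hε2 : 0 < ε / 2 := by linarith
    have h1 := key (ε/2) hε2 s hs t ht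
    have h2 := aux_approx' (ε/2) (Real.log (α t)) hε2
    have h3 := aux_approx' (ε/2) (Real.log (α s)) hε2
    have := abs_sub_abs_le_abs_sub (Real.log (1 + |Real.log (α t)|)) (Real.log (1 + |Real.log (α s)|))
    rw [abs_sub_le_iff] at h1 h2 h3 ⊢
    constructor <;> linarith
  refine ⟨C, hC, lip, ?_⟩
  intro s hs t ht
  have h := lip s hs t ht
  have hts : |t - s| ≤ T := by
    rw [abs_sub_le_iff]
    constructor <;> [linarith [ht.1, ht.2, hs.1, hs.2]; linarith [ht.1, ht.2, hs.1, hs.2]]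
  have hCT : |Real.log (1 + |Real.log (α t)|) - Real.log (1 + |Real.log (α s)|)| ≤ C * T :=
    h.trans (by nlinarith [abs_nonneg (t - s)])
  rw [abs_sub_le_iff] at hCT
  have hpt : (0:ℝ) < 1 + |Real.log (α t)| := by positivity
  have hps : (0:ℝ) < 1 + |Real.log (α s)| := by positivity
  calc 1 + |Real.log (α t)| = Real.exp (Real.log (1 + |Real.log (α t)|)) :=
        (Real.exp_log hpt).symm
    _ ≤ Real.exp (C * T + Real.log (1 + |Real.log (α s)|)) := by
        apply Real.exp_le_exp.2; linarith [hCT.1]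
    _ = Real.exp (C * T) * (1 + |Real.log (α s)|) := by
        rw [Real.exp_add, Real.exp_log hps]
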